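/- Let C be a binary linear code in 𝔽₂ⁿ that is not even (contains a codeword of odd weight) and has minimum distance at least 2. Then the bipartite double of the coset graph Γ(C) is isomorphic to the coset graph Γ(C ∩ Eₙ), where Eₙ is the set of even-weight vectors; the isomorphism sends x + (C ∩ Eₙ) to (x+C, wt(x) mod 2). -/

import Mathlib

/-- The standard basis vector `e_i` of `𝔽₂ⁿ`. -/
def stdBasis (n : ℕ) (i : Fin n) : Fin n → ZMod 2 :=
  fun k => if k = i then 1 else 0

lemma stdBasis_add_self (n : ℕ) (i : Fin n) : stdBasis n i + stdBasis n i = 0 := by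
  funext k; exact CharTwo.add_self_eq_zero _

/-- The coset graph `Γ(C)` of a binary linear code `C ≤ 𝔽₂ⁿ`: vertices are the
cosets of `C`, with `x + C` adjacent to `x + e_i + C` (when distinct). -/
def cosetGraph {n : ℕ} (C : Submodule (ZMod 2) (Fin n → ZMod 2)) :
    SimpleGraph ((Fin n → ZMod 2) ⧸ C) where
  Adj a b := a ≠ b ∧ ∃ i : Fin n, b = a + Submodule.Quotient.mk (stdBasis n i)
  symm := ⟨by
    rintro a b ⟨hne, i, rfl⟩
    refine ⟨hne.symm, i, ?_⟩
    rw [add_assoc, ← Submodule.Quotient.mk_add, stdBasis_add_self]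
    simp⟩
  loopless := ⟨fun a h => h.1 rfl⟩

/-- `C` has minimum distance at least `d`: every nonzero codeword has
Hamming weight at least `d`. -/
def MinDistAtLeast {n : ℕ} (C : Submodule (ZMod 2) (Fin n → ZMod 2)) (d : ℕ) : Prop :=
  ∀ c ∈ C, c ≠ 0 → d ≤ hammingNorm c

lemma zmod2_cases (c : ZMod 2) : c = 0 ∨ c = 1 := by revert c; decide

lemma cast_hammingNorm {n : ℕ} (x : Fin n → ZMod 2) :
    (hammingNorm x : ZMod 2) = ∑ i, x i := by
  classical
  rw [hammingNorm, Finset.card_filter]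
  push_cast
  refine Finset.sum_congr rfl fun i _ => ?_
  rcases zmod2_cases (x i) with h | h <;> simp [h]

lemma even_hammingNorm_iff {n : ℕ} (x : Fin n → ZMod 2) :
    Even (hammingNorm x) ↔ ∑ i, x i = 0 := by
  rw [← cast_hammingNorm, ZMod.natCast_eq_zero_iff]; exact even_iff_two_dvd

/-- The even-weight vectors form a binary linear code `Eₙ ≤ 𝔽₂ⁿ`. -/
def evenSubmodule (n : ℕ) : Submodule (ZMod 2) (Fin n → ZMod 2) where
  carrier := {x | Even (hammingNorm x)}
  zero_mem' := by simp
  add_mem' := by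
    intro a b ha hb
    simp only [Set.mem_setOf_eq, even_hammingNorm_iff] at *
    simp [Finset.sum_add_distrib, ha, hb]
  smul_mem' := by
    intro c x hx
    rcases zmod2_cases c with h | h <;> simp_all

/-- The bipartite double of a graph. -/
def bipDouble {V : Type*} (G : SimpleGraph V) : SimpleGraph (V × ZMod 2) where
  Adj p q := G.Adj p.1 q.1 ∧ p.2 ≠ q.2
  symm := ⟨fun p q h => ⟨h.1.symm, h.2.symm⟩⟩
  loopless := ⟨fun p h => h.2 rfl⟩

/-- The linear functional summing the coordinates. -/
def sumLin (n : ℕ) : (Fin n → ZMod 2) →ₗ[ZMod 2] ZMod 2 where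
  toFun x := ∑ i, x i
  map_add' := by intros; simp [Finset.sum_add_distrib]
  map_smul' := by intros; simp [Finset.mul_sum]

lemma sum_stdBasis (n : ℕ) (i : Fin n) : ∑ k, stdBasis n i k = 1 := by
  simp [stdBasis]

lemma hammingNorm_stdBasis (n : ℕ) (i : Fin n) : hammingNorm (stdBasis n i) = 1 := by
  classical
  have : (Finset.univ.filter fun k => stdBasis n i k ≠ 0) = {i} := by
    ext k; simp [stdBasis]
  simp [hammingNorm, this]

lemma mem_evenSubmodule_iff {n : ℕ} (x : Fin n → ZMod 2) :
    x ∈ evenSubmodule n ↔ ∑ i, x i = 0 := by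
  show Even (hammingNorm x) ↔ _
  exact even_hammingNorm_iff x

lemma zmod2_ne_iff (a b : ZMod 2) : a ≠ b ↔ a = b + 1 := by revert a b; decide

/-- If `C` is a non-even binary linear code with minimum distance at least 2,
then the bipartite double of `Γ(C)` is isomorphic to `Γ(C ∩ Eₙ)`, via
`x + (C ∩ Eₙ) ↦ (x + C, wt(x) mod 2)`. -/
theorem bipDouble_cosetGraph_iso {n : ℕ}
    (C : Submodule (ZMod 2) (Fin n → ZMod 2)) (hd : MinDistAtLeast C 2)
    (hodd : ∃ c ∈ C, ¬ Even (hammingNorm c)) :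
    ∃ φ : cosetGraph (C ⊓ evenSubmodule n) ≃g bipDouble (cosetGraph C),
      ∀ x : Fin n → ZMod 2,
        φ (Submodule.Quotient.mk x) =
          (Submodule.Quotient.mk x, (hammingNorm x : ZMod 2)) := by
  classical
  set CE := C ⊓ evenSubmodule n with hCE
  -- the target is a module
  let f : (Fin n → ZMod 2) →ₗ[ZMod 2] ((Fin n → ZMod 2) ⧸ C) × ZMod 2 :=
    LinearMap.prod C.mkQ (sumLin n)
  have hker : CE ≤ LinearMap.ker f := by
    rintro x ⟨hxC, hxE⟩
    have h1 : C.mkQ x = 0 := (Submodule.Quotient.mk_eq_zero C).2 hxC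
    have h2 : sumLin n x = 0 := (mem_evenSubmodule_iff x).1 hxE
    simp only [LinearMap.mem_ker, f, LinearMap.prod_apply, Function.prod, Prod.mk_eq_zero]
    exact ⟨h1, h2⟩
  let φL := CE.liftQ f hker
  have hφmk : ∀ x : Fin n → ZMod 2,
      φL (Submodule.Quotient.mk x) = (Submodule.Quotient.mk x, ∑ i, x i) := by
    intro x; rfl
  have hinj : Function.Injective φL := by
    rw [← LinearMap.ker_eq_bot, Submodule.ker_liftQ_eq_bot]
    rintro x hx
    have h1 : C.mkQ x = 0 ∧ sumLin n x = 0 := by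
      have := Prod.ext_iff.1 hx; simpa [f] using this
    exact ⟨(Submodule.Quotient.mk_eq_zero C).1 h1.1, (mem_evenSubmodule_iff x).2 h1.2⟩
  obtain ⟨c, hcC, hcodd⟩ := hodd
  have hsumc : ∑ i, c i = 1 := by
    rcases zmod2_cases (∑ i, c i) with h | h
    · exact absurd ((even_hammingNorm_iff c).2 h) hcodd
    · exact h
  have hsurj : Function.Surjective φL := by
    rintro ⟨q, b⟩
    obtain ⟨x, rfl⟩ := Submodule.Quotient.mk_surjective C q
    rcases zmod2_cases (b + ∑ i, x i) with h | h
    · refine ⟨Submodule.Quotient.mk x, ?_⟩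
      rw [hφmk]
      have hb : ∑ i, x i = b := by
        have := congrArg (· + ∑ i, x i) h
        simpa [add_assoc, CharTwo.add_self_eq_zero] using this.symm
      simp [hb]
    · refine ⟨Submodule.Quotient.mk (x + c), ?_⟩
      rw [hφmk]
      have h1 : Submodule.Quotient.mk (p := C) (x + c) = Submodule.Quotient.mk x := by
        rw [Submodule.Quotient.eq]; simpa using hcC
      have h2 : ∑ i, (x + c) i = b := by
        have hb : b = ∑ i, x i + 1 := by
          have := congrArg (· + ∑ i, x i) h
          simp only [add_comm, add_left_comm] at this
          simpa [add_assoc, CharTwo.add_self_eq_zero] using this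
        simp [Finset.sum_add_distrib, hsumc, hb, add_comm]
      rw [h1, h2]
  -- adjacency correspondence
  have hadj : ∀ x y : Fin n → ZMod 2,
      (bipDouble (cosetGraph C)).Adj (Submodule.Quotient.mk x, ∑ i, x i)
        (Submodule.Quotient.mk y, ∑ i, y i) ↔
      (cosetGraph CE).Adj (Submodule.Quotient.mk x) (Submodule.Quotient.mk y) := by
    intro x y
    constructor
    · rintro ⟨⟨hne, i, hi⟩, hpar⟩
      dsimp only at hne hi hpar
      have hci : y - (x + stdBasis n i) ∈ C := by
        rw [← Submodule.Quotient.eq]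
        rw [hi, Submodule.Quotient.mk_add]
      set d := y - (x + stdBasis n i) with hdd
      have hyd : y = x + stdBasis n i + d := by rw [hdd]; ring
      have hsumd : ∑ k, d k = 0 := by
        have hsy : ∑ k, y k = ∑ k, x k + 1 + ∑ k, d k := by
          rw [hyd]; simp [Finset.sum_add_distrib, sum_stdBasis]
        rcases zmod2_cases (∑ k, d k) with h | h
        · exact h
        · exfalso; apply hpar
          have h2 : (1 : ZMod 2) + 1 = 0 := by decide
          rw [hsy, h, add_assoc, h2, add_zero]
      have hdE : d ∈ CE := ⟨hci, (mem_evenSubmodule_iff d).2 hsumd⟩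
      refine ⟨?_, i, ?_⟩
      · intro heq
        rw [Submodule.Quotient.eq] at heq
        have : x - y ∈ evenSubmodule n := heq.2
        have h0 : ∑ k, (x - y) k = 0 := (mem_evenSubmodule_iff _).1 this
        apply hpar
        have : ∑ k, x k - ∑ k, y k = 0 := by
          rw [← h0]; simp [Finset.sum_sub_distrib]
        linear_combination (norm := abel) (sub_eq_zero.mp this)
      · rw [← Submodule.Quotient.mk_add, Submodule.Quotient.eq]
        have : y - (x + stdBasis n i) = d := rfl
        rw [this]
        exact hdE
    · rintro ⟨hne, i, hi⟩
      have hci : y - (x + stdBasis n i) ∈ CE := by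
        rw [← Submodule.Quotient.eq]
        rw [hi, Submodule.Quotient.mk_add]
      obtain ⟨hdC, hdE⟩ := hci
      set d := y - (x + stdBasis n i) with hdd
      have hyd : y = x + stdBasis n i + d := by rw [hdd]; ring
      have hsumd : ∑ k, d k = 0 := (mem_evenSubmodule_iff d).1 hdE
      have hsy : ∑ k, y k = ∑ k, x k + 1 := by
        rw [hyd]; simp [Finset.sum_add_distrib, sum_stdBasis, hsumd]
      have hpar : ∑ k, x k ≠ ∑ k, y k := by
        rw [hsy]; rcases zmod2_cases (∑ k, x k) with h | h <;> simp [h]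
      refine ⟨⟨?_, i, ?_⟩, hpar⟩
      · intro heq
        rw [Submodule.Quotient.eq] at heq
        have hxyC : x - y ∈ C := heq
        -- then stdBasis n i ∈ C, contradicting min distance
        have : stdBasis n i = -(x - y) - d := by rw [hdd]; ring
        have hstd : stdBasis n i ∈ C := by
          rw [this]; exact C.sub_mem (C.neg_mem hxyC) hdC
        have := hd _ hstd (by
          intro h0
          have := congrFun h0 i
          simp [stdBasis] at this)
        rw [hammingNorm_stdBasis] at this
        omega
      · rw [← Submodule.Quotient.mk_add, Submodule.Quotient.eq]
        exact hdC
  -- assemble the isomorphism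
  let e : ((Fin n → ZMod 2) ⧸ CE) ≃ₗ[ZMod 2] ((Fin n → ZMod 2) ⧸ C) × ZMod 2 :=
    LinearEquiv.ofBijective φL ⟨hinj, hsurj⟩
  refine ⟨⟨e.toEquiv, ?_⟩, ?_⟩
  · intro a b
    obtain ⟨x, rfl⟩ := Submodule.Quotient.mk_surjective CE a
    obtain ⟨y, rfl⟩ := Submodule.Quotient.mk_surjective CE b
    have h1 : e.toEquiv (Submodule.Quotient.mk x) = φL (Submodule.Quotient.mk x) := rfl
    have h2 : e.toEquiv (Submodule.Quotient.mk y) = φL (Submodule.Quotient.mk y) := rfl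
    rw [h1, h2, hφmk, hφmk]
    exact hadj x y
  · intro x
    show φL (Submodule.Quotient.mk x) = _
    rw [hφmk, cast_hammingNorm]
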